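/- Let p be a prime, and k, d ≥ 1 integers, and let s_1,…,s_d ≥ 1. Then in ℚ_p: (p^k)^{s_1+⋯+s_d} · H_{p^k}(s_d,…,s_1) = ∑ over all tuples (v_i, q_i, r_i)_{i=1,…,d} with v_i ∈ {0,…,k−1}, q_i ≥ 0, r_i ∈ {1,…,p−1} satisfying 0 < p^{v_1}(pq_1+r_1) < ⋯ < p^{v_d}(pq_d+r_d) < p^k, of (∏_{i=1}^d (p^{k−v_i})^{s_i}) · ∑_{l_1,…,l_d ≥ 0} ∏_{i=1}^d (p·q_i)^{l_i} · binom(−s_i, l_i) · r_i^{−(s_i+l_i)}, the family being summable in ℚ_p. -/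

import Mathlib

open Finset

/-- The generalized binomial coefficient `binom(−s,l) = (−1)^l · C(s+l−1, l) ∈ ℤ`. -/
def negBinom (s l : ℕ) : ℤ := (-1) ^ l * (Nat.choose (s + l - 1) l : ℤ)

/-- The finite set of strictly increasing chains `0 < n_1 < ⋯ < n_d < N` of natural numbers. -/
def chainsN (d N : ℕ) : Finset (Fin d → ℕ) :=
  (Fintype.piFinset fun _ : Fin d => Finset.Ioo 0 N).filter
    (fun n => ∀ i j : Fin d, i < j → n i < n j)

section Aux

variable {p : ℕ} [hp : Fact p.Prime]

lemma negBinom_norm_summable (s : ℕ) (x : ℚ_[p]) (hx : ‖x‖ < 1) :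
    Summable fun l => ‖(negBinom s l : ℚ_[p]) * x ^ l‖ := by
  refine Summable.of_nonneg_of_le (fun _ => norm_nonneg _) (fun l => ?_)
    (summable_geometric_of_lt_one (norm_nonneg x) hx)
  rw [norm_mul, norm_pow]
  calc ‖((negBinom s l : ℤ) : ℚ_[p])‖ * ‖x‖ ^ l ≤ 1 * ‖x‖ ^ l := by
        gcongr; exact Padic.norm_int_le_one _
    _ = ‖x‖ ^ l := one_mul _

lemma one_add_ne_zero_of_norm_lt {x : ℚ_[p]} (hx : ‖x‖ < 1) : (1 : ℚ_[p]) + x ≠ 0 := by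
  intro h
  have : x = -1 := by linear_combination h
  rw [this] at hx; simp at hx

lemma negBinom_hasSum (s : ℕ) (hs : 1 ≤ s) (x : ℚ_[p]) (hx : ‖x‖ < 1) :
    HasSum (fun l => (negBinom s l : ℚ_[p]) * x ^ l) ((1 + x) ^ (-(s : ℤ))) := by
  have h1x : (1 : ℚ_[p]) + x ≠ 0 := one_add_ne_zero_of_norm_lt hx
  induction s with
  | zero => omega
  | succ n ih =>
    rcases Nat.eq_or_lt_of_le hs with h1 | h2
    · have hn : n = 0 := by omega
      subst hn
      have he : ∀ l, ((negBinom 1 l : ℤ) : ℚ_[p]) * x ^ l = (-x) ^ l := by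
        intro l
        rw [neg_pow]
        simp [negBinom]
      rw [funext he]
      have := hasSum_geometric_of_norm_lt_one (ξ := -x) (by simpa using hx)
      simpa [sub_neg_eq_add, zpow_neg, add_comm] using this
    · have hn : 1 ≤ n := by omega
      have key := ih hn
      have hf : Summable fun l => ‖(negBinom n l : ℚ_[p]) * x ^ l‖ :=
        negBinom_norm_summable n x hx
      have hg : Summable fun l => ‖(-x : ℚ_[p]) ^ l‖ := by
        simpa [norm_pow] using summable_geometric_of_lt_one (norm_nonneg x) hx
      have hgs : HasSum (fun l => (-x : ℚ_[p]) ^ l) ((1 + x)⁻¹) := by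
        have := hasSum_geometric_of_norm_lt_one (ξ := -x) (by simpa using hx)
        simpa [sub_neg_eq_add] using this
      have hC := tsum_mul_tsum_eq_tsum_sum_antidiagonal_of_summable_norm hf hg
      rw [key.tsum_eq, hgs.tsum_eq] at hC
      have hterm : ∀ m : ℕ, (∑ kl ∈ antidiagonal m,
          ((negBinom n kl.1 : ℤ) : ℚ_[p]) * x ^ kl.1 * (-x) ^ kl.2)
          = (negBinom (n+1) m : ℚ_[p]) * x ^ m := by
        intro m
        rw [Nat.sum_antidiagonal_eq_sum_range_succ_mk]
        have : ∀ a ∈ range (m+1), ((negBinom n a : ℤ) : ℚ_[p]) * x ^ a * (-x) ^ (m - a)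
            = ((-1 : ℚ_[p]) ^ m * ((n - 1 + a).choose a : ℕ)) * x ^ m := by
          intro a ha
          rw [mem_range] at ha
          have ham : a ≤ m := by omega
          rw [neg_pow]
          have hc : n + a - 1 = n - 1 + a := by omega
          have hx' : x ^ a * x ^ (m - a) = x ^ m := by
            rw [← pow_add]; congr 1; omega
          have hsgn : (-1 : ℚ_[p]) ^ a * (-1 : ℚ_[p]) ^ (m - a) = (-1) ^ m := by
            rw [← pow_add]; congr 1; omega
          have he : ((negBinom n a : ℤ) : ℚ_[p]) * x ^ a * ((-1:ℚ_[p]) ^ (m-a) * x ^ (m - a))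
              = (((n-1+a).choose a : ℚ_[p])) * (x^a * x^(m-a)) * ((-1:ℚ_[p])^a * (-1:ℚ_[p])^(m-a)) := by
            simp only [negBinom, hc]; push_cast; ring
          rw [he, hx', hsgn]
          ring
        rw [Finset.sum_congr rfl this, ← Finset.sum_mul, ← Finset.mul_sum]
        rw [← Nat.cast_sum]
        have hhs : ∑ a ∈ range (m+1), (n - 1 + a).choose a = (n + m).choose m := by
          have := Nat.sum_range_add_choose m (n-1)
          calc ∑ a ∈ range (m+1), (n - 1 + a).choose a
              = ∑ a ∈ range (m+1), (a + (n-1)).choose (n-1) := by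
                refine Finset.sum_congr rfl fun a _ => ?_
                rw [add_comm (n-1) a, Nat.choose_symm_add]
            _ = (m + (n-1) + 1).choose (n-1+1) := this
            _ = (n + m).choose n := by congr 1 <;> omega
            _ = (n + m).choose m := by rw [Nat.choose_symm_add]
        rw [hhs]
        simp only [negBinom]
        have : n + 1 + m - 1 = n + m := by omega
        rw [this]
        push_cast
        ring
      rw [funext hterm] at hC
      have hsum : Summable fun l => ((negBinom (n+1) l : ℤ) : ℚ_[p]) * x ^ l :=
        (negBinom_norm_summable (n+1) x hx).of_norm
      have hz : (1 + x) ^ (-(n : ℤ)) * (1 + x)⁻¹ = (1 + x) ^ (-(((n+1) : ℕ) : ℤ)) := by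
        rw [← zpow_neg_one, ← zpow_add₀ h1x]
        congr 1
        push_cast
        ring
      rw [hz] at hC
      exact hsum.hasSum_iff.2 hC.symm

section factor

variable (s q r : ℕ)

/-- The summand of the expansion of a single factor. -/
noncomputable def Fterm (p : ℕ) [Fact p.Prime] (s q r l : ℕ) : ℚ_[p] :=
  ((p * q : ℕ) : ℚ_[p]) ^ l * (negBinom s l : ℚ_[p]) * ((r : ℚ_[p])) ^ (-((s : ℤ) + (l : ℤ)))

variable (hs : 1 ≤ s) (hr1 : 1 ≤ r) (hr2 : r < p)

include hr1 hr2 in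
lemma norm_r_eq_one : ‖(r : ℚ_[p])‖ = 1 := by
  have hd : ¬ (p : ℤ) ∣ (r : ℤ) := by
    rw [Int.natCast_dvd_natCast]
    exact Nat.not_dvd_of_pos_of_lt hr1 hr2
  have := (Padic.norm_intCast_lt_one_iff (p := p) (k := (r : ℤ))).not.2 hd
  push_cast at this
  have hle : ‖(r : ℚ_[p])‖ ≤ 1 := by
    have := Padic.norm_int_le_one (p := p) (r : ℤ)
    push_cast at this
    exact this
  linarith [lt_or_ge ‖(r : ℚ_[p])‖ 1]

include hr1 hr2 in
lemma norm_x_lt_one : ‖((p * q : ℕ) : ℚ_[p]) * ((r : ℚ_[p]))⁻¹‖ < 1 := by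
  rw [norm_mul, norm_inv, norm_r_eq_one r hr1 hr2]
  have : ‖((p * q : ℕ) : ℚ_[p])‖ < 1 := by
    have := (Padic.norm_intCast_lt_one_iff (p := p) (k := ((p * q : ℕ) : ℤ))).2
      (by exact_mod_cast Dvd.intro q rfl)
    push_cast at this ⊢
    exact this
  simpa using this

include hr1 hr2 in
lemma Fterm_eq : ∀ l, (Fterm p s q r l : ℚ_[p]) =
    ((negBinom s l : ℚ_[p]) * (((p * q : ℕ) : ℚ_[p]) * ((r : ℚ_[p]))⁻¹) ^ l)
      * ((r : ℚ_[p])) ^ (-(s : ℤ)) := by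
  intro l
  have hr0 : (r : ℚ_[p]) ≠ 0 := by
    have := norm_r_eq_one (p := p) r hr1 hr2
    intro h; rw [h] at this; simp at this
  have hz : (r:ℚ_[p])^(-((s:ℤ)+(l:ℤ))) = (r:ℚ_[p])^(-(s:ℤ)) * ((r:ℚ_[p])⁻¹)^l := by
    rw [inv_pow, ← zpow_natCast (r:ℚ_[p]) l, ← zpow_neg, ← zpow_add₀ hr0]
    congr 1
    ring
  rw [Fterm, hz, mul_pow]
  ring

include hr1 hr2 in
lemma Fterm_norm_summable : Summable fun l => ‖(Fterm p s q r l : ℚ_[p])‖ := by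
  have hx := norm_x_lt_one (p := p) q r hr1 hr2
  have := (negBinom_norm_summable s _ hx).mul_right ‖((r : ℚ_[p])) ^ (-(s : ℤ))‖
  refine this.congr fun l => ?_
  rw [← norm_mul, ← Fterm_eq s q r hr1 hr2]

include hs hr1 hr2 in
lemma Fterm_hasSum :
    HasSum (fun l => (Fterm p s q r l : ℚ_[p])) (((p * q + r : ℕ) : ℚ_[p]) ^ (-(s : ℤ))) := by
  have hx := norm_x_lt_one (p := p) q r hr1 hr2
  have hr0 : (r : ℚ_[p]) ≠ 0 := by
    have := norm_r_eq_one (p := p) r hr1 hr2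
    intro h; rw [h] at this; simp at this
  have h := (negBinom_hasSum s hs _ hx).mul_right (((r : ℚ_[p])) ^ (-(s : ℤ)))
  have hval : (1 + ((p * q : ℕ) : ℚ_[p]) * ((r : ℚ_[p]))⁻¹) ^ (-(s : ℤ))
        * ((r : ℚ_[p])) ^ (-(s : ℤ))
      = ((p * q + r : ℕ) : ℚ_[p]) ^ (-(s : ℤ)) := by
    rw [← mul_zpow]
    congr 1
    field_simp
    push_cast
    ring
  rw [hval] at h
  exact h.congr_fun fun l => Fterm_eq s q r hr1 hr2 l

end factor

set_option maxHeartbeats 1000000 in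
lemma pi_hasSum : ∀ (d : ℕ) (f : Fin d → ℕ → ℚ_[p]) (a : Fin d → ℚ_[p]),
    (∀ i, Summable fun n => ‖f i n‖) → (∀ i, HasSum (f i) (a i)) →
    (Summable fun l : Fin d → ℕ => ‖∏ i, f i (l i)‖) ∧
      HasSum (fun l : Fin d → ℕ => ∏ i, f i (l i)) (∏ i, a i) := by
  intro d
  induction d with
  | zero =>
    intro f a _ _
    constructor
    · exact summable_of_finite_support (Set.Finite.subset (Set.finite_univ) (by simp))
    · simp only [univ_eq_empty, prod_empty]
      have h := hasSum_single (f := fun _ : Fin 0 → ℕ => (1 : ℚ_[p])) default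
        (fun b' hb' => absurd (Subsingleton.elim b' default) hb')
      simpa using h
  | succ d ih =>
    intro f a hn h
    obtain ⟨ihs, ihh⟩ := ih (fun i => f i.succ) (fun i => a i.succ) (fun i => hn i.succ)
      (fun i => h i.succ)
    set w : (Fin d → ℕ) → ℚ_[p] := fun m => ∏ i, f i.succ (m i) with hw
    have ihs' : Summable fun l : Fin d → ℕ => ‖w l‖ := ihs
    have ihh' : HasSum w (∏ i : Fin d, a i.succ) := ihh
    set e := (Fin.consEquiv fun _ : Fin (d+1) => ℕ).symm with he
    have hkey : ∀ l : Fin (d+1) → ℕ, ∏ i, f i (l i) = f 0 (e l).1 * w ((e l).2) := by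
      intro l
      rw [Fin.prod_univ_succ]
      rfl
    have hFn : Summable fun x : ℕ × (Fin d → ℕ) => ‖f 0 x.1 * w x.2‖ :=
      Summable.mul_norm (hn 0) ihs'
    have hFs : Summable fun x : ℕ × (Fin d → ℕ) => f 0 x.1 * w x.2 := hFn.of_norm
    have hF : HasSum (fun x : ℕ × (Fin d → ℕ) => f 0 x.1 * w x.2)
        (a 0 * ∏ i : Fin d, a i.succ) := by
      rw [hFs.hasSum_iff]
      rw [← tsum_mul_tsum_of_summable_norm (hn 0) ihs', (h 0).tsum_eq, ihh'.tsum_eq]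
    constructor
    · rw [← Equiv.summable_iff e.symm]
      refine hFn.congr fun x => ?_
      simp only [Function.comp]
      rw [hkey (e.symm x), Equiv.apply_symm_apply]
    · rw [Fin.prod_univ_succ]
      rw [← Equiv.hasSum_iff e.symm]
      refine hF.congr_fun fun x => ?_
      simp only [Function.comp]
      rw [hkey (e.symm x), Equiv.apply_symm_apply]

/-- valuation, odd part, remainder, quotient of the decomposition `n = p^v (p q + r)`. -/
def Vv (p n : ℕ) : ℕ := n.factorization p
def Mm (p n : ℕ) : ℕ := n / p ^ Vv p n
def Rr (p n : ℕ) : ℕ := Mm p n % p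
def Qq (p n : ℕ) : ℕ := Mm p n / p

omit hp in
lemma decomp_eq (n : ℕ) : p ^ Vv p n * (p * Qq p n + Rr p n) = n := by
  have h1 : p * Qq p n + Rr p n = Mm p n := Nat.div_add_mod _ _
  rw [h1]
  exact Nat.ordProj_mul_ordCompl_eq_self n p

lemma not_dvd_Mm (n : ℕ) (hn : 0 < n) : ¬ p ∣ Mm p n :=
  Nat.not_dvd_ordCompl hp.out hn.ne'

lemma Rr_pos (n : ℕ) (hn : 0 < n) : 1 ≤ Rr p n := by
  rcases Nat.eq_zero_or_pos (Rr p n) with h | h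
  · exact absurd (Nat.dvd_of_mod_eq_zero h) (not_dvd_Mm n hn)
  · exact h

lemma Rr_lt (n : ℕ) : Rr p n < p := Nat.mod_lt _ hp.out.pos

lemma Vv_lt (n k : ℕ) (hn : 0 < n) (hnk : n < p ^ k) : Vv p n < k := by
  have h1 : p ^ Vv p n ≤ n := Nat.le_of_dvd hn (Nat.ordProj_dvd n p)
  exact (Nat.pow_lt_pow_iff_right hp.out.one_lt).1 (lt_of_le_of_lt h1 hnk)

lemma Vv_unique (v q r : ℕ) (hr1 : 1 ≤ r) (hr2 : r < p) :
    Vv p (p ^ v * (p * q + r)) = v := by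
  have hm : ¬ p ∣ (p * q + r) := by
    intro h
    have : p ∣ r := (Nat.dvd_add_right ⟨q, rfl⟩).1 h
    exact Nat.not_dvd_of_pos_of_lt hr1 hr2 this
  have hm0 : p * q + r ≠ 0 := by positivity
  rw [Vv, Nat.factorization_mul (pow_pos hp.out.pos v).ne' hm0]
  simp [Nat.Prime.factorization_pow hp.out, Nat.factorization_eq_zero_of_not_dvd hm]

lemma QR_unique (v q r : ℕ) (hr1 : 1 ≤ r) (hr2 : r < p) :
    Qq p (p ^ v * (p * q + r)) = q ∧ Rr p (p ^ v * (p * q + r)) = r := by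
  have hM : Mm p (p ^ v * (p * q + r)) = p * q + r := by
    rw [Mm, Vv_unique v q r hr1 hr2, Nat.mul_div_cancel_left _ (pow_pos hp.out.pos v)]
  constructor
  · rw [Qq, hM, Nat.mul_add_div hp.out.pos, Nat.div_eq_of_lt hr2, add_zero]
  · rw [Rr, hM, Nat.mul_add_mod, Nat.mod_eq_of_lt hr2]

/-- the per-index scalar identity -/
lemma scalar_eq (k v sN m : ℕ) (hv : v < k) (hm : 0 < m) :
    ((p:ℚ_[p])^k)^sN * (1 / (((p^v * m : ℕ)) : ℚ_[p])^sN)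
      = ((p:ℚ_[p])^(k-v))^sN * ((m : ℚ_[p])) ^ (-(sN:ℤ)) := by
  have hp0 : (p:ℚ_[p]) ≠ 0 := Nat.cast_ne_zero.2 hp.out.pos.ne'
  have hm0 : (m : ℚ_[p]) ≠ 0 := Nat.cast_ne_zero.2 hm.ne'
  rw [zpow_neg, zpow_natCast]
  push_cast
  rw [mul_pow, one_div, mul_inv]
  have hkey : ((p:ℚ_[p])^(k-v))^sN * ((p:ℚ_[p])^v)^sN = ((p:ℚ_[p])^k)^sN := by
    rw [← mul_pow, ← pow_add, Nat.sub_add_cancel hv.le]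
  have hiv : (((p:ℚ_[p])^v)^sN)⁻¹ * ((p:ℚ_[p])^v)^sN = 1 := by
    field_simp
  calc ((p:ℚ_[p])^k)^sN * ((((p:ℚ_[p])^v)^sN)⁻¹ * ((m:ℚ_[p])^sN)⁻¹)
      = (((p:ℚ_[p])^(k-v))^sN * ((p:ℚ_[p])^v)^sN)
          * ((((p:ℚ_[p])^v)^sN)⁻¹ * ((m:ℚ_[p])^sN)⁻¹) := by rw [hkey]
    _ = ((p:ℚ_[p])^(k-v))^sN * ((m:ℚ_[p])^sN)⁻¹
          * ((((p:ℚ_[p])^v)^sN)⁻¹ * ((p:ℚ_[p])^v)^sN) := by ring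
    _ = _ := by rw [hiv, mul_one]

end Aux

/-- The full summand function. -/
noncomputable def bigF (p : ℕ) [Fact p.Prime] (k : ℕ) {d : ℕ} (s : Fin d → ℕ)
    (t : (Fin d → ℕ) × (Fin d → ℕ) × (Fin d → ℕ) × (Fin d → ℕ)) : ℚ_[p] :=
  if (∀ i, t.1 i ≤ k - 1) ∧ (∀ i, 1 ≤ t.2.2.1 i ∧ t.2.2.1 i ≤ p - 1) ∧
      (∀ i, 0 < p ^ (t.1 i) * (p * t.2.1 i + t.2.2.1 i)) ∧
      (∀ i j : Fin d, i < j →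
        p ^ (t.1 i) * (p * t.2.1 i + t.2.2.1 i) <
          p ^ (t.1 j) * (p * t.2.1 j + t.2.2.1 j)) ∧
      (∀ i, p ^ (t.1 i) * (p * t.2.1 i + t.2.2.1 i) < p ^ k) then
    (∏ i, ((p : ℚ_[p]) ^ (k - t.1 i)) ^ (s i)) *
      ∏ i, ((p * t.2.1 i : ℕ) : ℚ_[p]) ^ (t.2.2.2 i) *
        (negBinom (s i) (t.2.2.2 i) : ℚ_[p]) *
        ((t.2.2.1 i : ℚ_[p])) ^ (-((s i : ℤ) + (t.2.2.2 i : ℤ)))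
  else 0

set_option maxHeartbeats 2000000 in
/-- `p`-adic expansion of `(p^k)^{s_1+⋯+s_d}·H_{p^k}(s_d,…,s_1)`: writing each index uniquely
as `n_i = p^{v_i}(pq_i+r_i)` with `v_i ∈ {0,…,k−1}`, `q_i ≥ 0` and `r_i ∈ {1,…,p−1}`,
`(p^k)^{s_1+⋯+s_d}·H_{p^k}(s_d,…,s_1) = ∑_{(v,q,r) chains} (∏_i (p^{k−v_i})^{s_i}) ·
∑_{l_1,…,l_d ≥ 0} ∏_i (pq_i)^{l_i}·binom(−s_i,l_i)·r_i^{−(s_i+l_i)}`, the whole family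
(over all `(v,q,r,l)`, vanishing outside the chain condition) being summable in `ℚ_p`. -/
theorem mhs_prime_power_expansion (p : ℕ) [Fact p.Prime] (k d : ℕ) (hk : 1 ≤ k) (hd : 1 ≤ d)
    (s : Fin d → ℕ) (hs : ∀ i, 1 ≤ s i) :
    Summable (fun t : (Fin d → ℕ) × (Fin d → ℕ) × (Fin d → ℕ) × (Fin d → ℕ) =>
        if (∀ i, t.1 i ≤ k - 1) ∧ (∀ i, 1 ≤ t.2.2.1 i ∧ t.2.2.1 i ≤ p - 1) ∧
            (∀ i, 0 < p ^ (t.1 i) * (p * t.2.1 i + t.2.2.1 i)) ∧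
            (∀ i j : Fin d, i < j →
              p ^ (t.1 i) * (p * t.2.1 i + t.2.2.1 i) <
                p ^ (t.1 j) * (p * t.2.1 j + t.2.2.1 j)) ∧
            (∀ i, p ^ (t.1 i) * (p * t.2.1 i + t.2.2.1 i) < p ^ k) then
          (∏ i, ((p : ℚ_[p]) ^ (k - t.1 i)) ^ (s i)) *
            ∏ i, ((p * t.2.1 i : ℕ) : ℚ_[p]) ^ (t.2.2.2 i) *
              (negBinom (s i) (t.2.2.2 i) : ℚ_[p]) *
              ((t.2.2.1 i : ℚ_[p])) ^ (-((s i : ℤ) + (t.2.2.2 i : ℤ)))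
        else 0) ∧
    ((p : ℚ_[p]) ^ k) ^ (∑ i, s i) * (∑ n ∈ chainsN d (p ^ k), ∏ i, 1 / (n i : ℚ_[p]) ^ s i)
      = ∑' t : (Fin d → ℕ) × (Fin d → ℕ) × (Fin d → ℕ) × (Fin d → ℕ),
          if (∀ i, t.1 i ≤ k - 1) ∧ (∀ i, 1 ≤ t.2.2.1 i ∧ t.2.2.1 i ≤ p - 1) ∧
              (∀ i, 0 < p ^ (t.1 i) * (p * t.2.1 i + t.2.2.1 i)) ∧
              (∀ i j : Fin d, i < j →
                p ^ (t.1 i) * (p * t.2.1 i + t.2.2.1 i) <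
                  p ^ (t.1 j) * (p * t.2.1 j + t.2.2.1 j)) ∧
              (∀ i, p ^ (t.1 i) * (p * t.2.1 i + t.2.2.1 i) < p ^ k) then
            (∏ i, ((p : ℚ_[p]) ^ (k - t.1 i)) ^ (s i)) *
              ∏ i, ((p * t.2.1 i : ℕ) : ℚ_[p]) ^ (t.2.2.2 i) *
                (negBinom (s i) (t.2.2.2 i) : ℚ_[p]) *
                ((t.2.2.1 i : ℚ_[p])) ^ (-((s i : ℤ) + (t.2.2.2 i : ℤ)))
          else 0 := by
  have hpp : p.Prime := Fact.out
  have hppos : 0 < p := hpp.pos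
  show Summable (bigF p k s) ∧
    ((p : ℚ_[p]) ^ k) ^ (∑ i, s i) * (∑ n ∈ chainsN d (p ^ k), ∏ i, 1 / (n i : ℚ_[p]) ^ s i)
      = ∑' t, bigF p k s t
  have hmem : ∀ n : Fin d → ℕ, n ∈ chainsN d (p ^ k) ↔
      (∀ i, 0 < n i ∧ n i < p ^ k) ∧ ∀ i j : Fin d, i < j → n i < n j := by
    intro n
    rw [chainsN, Finset.mem_filter, Fintype.mem_piFinset]
    simp only [Finset.mem_Ioo]
  set E : {y // y ∈ chainsN d (p ^ k)} × (Fin d → ℕ) →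
      (Fin d → ℕ) × (Fin d → ℕ) × (Fin d → ℕ) × (Fin d → ℕ) :=
    fun x => (fun i => Vv p (x.1.1 i), fun i => Qq p (x.1.1 i), fun i => Rr p (x.1.1 i), x.2)
    with hE
  have hdec : ∀ (n : Fin d → ℕ) (i : Fin d),
      p ^ Vv p (n i) * (p * Qq p (n i) + Rr p (n i)) = n i := fun n i => decomp_eq (p := p) (n i)
  -- value of bigF on the image of E
  have hFE : ∀ (x : {y // y ∈ chainsN d (p ^ k)}) (l : Fin d → ℕ),
      bigF p k s (E (x, l)) =
        (∏ i, ((p : ℚ_[p]) ^ (k - Vv p (x.1 i))) ^ (s i)) *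
          ∏ i, Fterm p (s i) (Qq p (x.1 i)) (Rr p (x.1 i)) (l i) := by
    intro x l
    obtain ⟨hio, hch⟩ := (hmem x.1).1 x.2
    have hc1 : ∀ i, Vv p (x.1 i) ≤ k - 1 := fun i => by
      have := Vv_lt (p := p) (x.1 i) k (hio i).1 (hio i).2; omega
    have hc2 : ∀ i, 1 ≤ Rr p (x.1 i) ∧ Rr p (x.1 i) ≤ p - 1 := fun i =>
      ⟨Rr_pos _ (hio i).1, by have := Rr_lt (p := p) (x.1 i); omega⟩
    have hc3 : ∀ i, 0 < p ^ (Vv p (x.1 i)) * (p * Qq p (x.1 i) + Rr p (x.1 i)) := fun i => by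
      rw [hdec x.1 i]; exact (hio i).1
    have hc4 : ∀ i j : Fin d, i < j →
        p ^ (Vv p (x.1 i)) * (p * Qq p (x.1 i) + Rr p (x.1 i)) <
          p ^ (Vv p (x.1 j)) * (p * Qq p (x.1 j) + Rr p (x.1 j)) := fun i j hij => by
      rw [hdec x.1 i, hdec x.1 j]; exact hch i j hij
    have hc5 : ∀ i, p ^ (Vv p (x.1 i)) * (p * Qq p (x.1 i) + Rr p (x.1 i)) < p ^ k := fun i => by
      rw [hdec x.1 i]; exact (hio i).2
    rw [hE]
    show bigF p k s (fun i => Vv p (x.1 i), fun i => Qq p (x.1 i), fun i => Rr p (x.1 i), l) = _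
    rw [bigF, if_pos ⟨hc1, hc2, hc3, hc4, hc5⟩]
    rfl
  -- injectivity of E
  have hEinj : Function.Injective E := by
    rintro ⟨⟨n, hn⟩, l⟩ ⟨⟨n', hn'⟩, l'⟩ h
    rw [hE] at h
    simp only [Prod.mk.injEq] at h
    obtain ⟨h1, h2, h3, h4⟩ := h
    have hnn : n = n' := by
      funext i
      conv_lhs => rw [← hdec n i]
      conv_rhs => rw [← hdec n' i]
      rw [congrFun h1 i, congrFun h2 i, congrFun h3 i]
    subst hnn
    simp [h4]
  -- support of bigF is contained in the range of E
  have hvan : ∀ t, t ∉ Set.range E → bigF p k s t = 0 := by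
    intro t ht
    obtain ⟨v, q, r, l⟩ := t
    by_contra h0
    rw [bigF] at h0
    by_cases hc : (∀ i, v i ≤ k - 1) ∧ (∀ i, 1 ≤ r i ∧ r i ≤ p - 1) ∧
        (∀ i, 0 < p ^ (v i) * (p * q i + r i)) ∧
        (∀ i j : Fin d, i < j → p ^ (v i) * (p * q i + r i) < p ^ (v j) * (p * q j + r j)) ∧
        (∀ i, p ^ (v i) * (p * q i + r i) < p ^ k)
    · obtain ⟨hc1, hc2, hc3, hc4, hc5⟩ := hc
      have hrlt : ∀ i, r i < p := fun i => by have := hc2 i; omega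
      have hnmem : (fun i => p ^ (v i) * (p * q i + r i)) ∈ chainsN d (p ^ k) :=
        (hmem _).2 ⟨fun i => ⟨hc3 i, hc5 i⟩, hc4⟩
      apply ht
      refine ⟨(⟨_, hnmem⟩, l), ?_⟩
      rw [hE]
      simp only [Prod.mk.injEq]
      refine ⟨?_, ?_, ?_, trivial⟩
      · funext i; exact Vv_unique (v i) (q i) (r i) (hc2 i).1 (hrlt i)
      · funext i; exact (QR_unique (v i) (q i) (r i) (hc2 i).1 (hrlt i)).1
      · funext i; exact (QR_unique (v i) (q i) (r i) (hc2 i).1 (hrlt i)).2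
    · exact h0 (if_neg hc)
  -- per-chain inner sums
  have hrfacts : ∀ (x : {y // y ∈ chainsN d (p ^ k)}) (i : Fin d),
      1 ≤ Rr p (x.1 i) ∧ Rr p (x.1 i) < p := fun x i =>
    ⟨Rr_pos _ (((hmem x.1).1 x.2).1 i).1, Rr_lt _⟩
  have hpi : ∀ x : {y // y ∈ chainsN d (p ^ k)},
      (Summable fun l : Fin d → ℕ =>
        ‖∏ i, Fterm p (s i) (Qq p (x.1 i)) (Rr p (x.1 i)) (l i)‖) ∧
      HasSum (fun l : Fin d → ℕ => ∏ i, Fterm p (s i) (Qq p (x.1 i)) (Rr p (x.1 i)) (l i))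
        (∏ i, ((p * Qq p (x.1 i) + Rr p (x.1 i) : ℕ) : ℚ_[p]) ^ (-(s i : ℤ))) := fun x =>
    pi_hasSum d (fun i => Fterm p (s i) (Qq p (x.1 i)) (Rr p (x.1 i)))
      (fun i => ((p * Qq p (x.1 i) + Rr p (x.1 i) : ℕ) : ℚ_[p]) ^ (-(s i : ℤ)))
      (fun i => Fterm_norm_summable _ _ _ (hrfacts x i).1 (hrfacts x i).2)
      (fun i => Fterm_hasSum _ _ _ (hs i) (hrfacts x i).1 (hrfacts x i).2)
  -- summability over the product index
  have hnorm : Summable fun x : {y // y ∈ chainsN d (p ^ k)} × (Fin d → ℕ) =>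
      ‖bigF p k s (E x)‖ := by
    rw [summable_prod_of_nonneg (fun _ => norm_nonneg _)]
    refine ⟨fun x => ?_, Summable.of_finite⟩
    refine (((hpi x).1.mul_left
      ‖∏ i, ((p : ℚ_[p]) ^ (k - Vv p (x.1 i))) ^ (s i)‖)).congr fun l => ?_
    rw [← norm_mul, ← hFE x l]
  have hsumE : Summable fun x : {y // y ∈ chainsN d (p ^ k)} × (Fin d → ℕ) =>
      bigF p k s (E x) := hnorm.of_norm
  have hsummF : Summable (bigF p k s) := (hEinj.summable_iff hvan).1 hsumE
  refine ⟨hsummF, ?_⟩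
  -- value computation
  have hslice : ∀ x : {y // y ∈ chainsN d (p ^ k)},
      ∑' l : Fin d → ℕ, bigF p k s (E (x, l)) =
        (∏ i, ((p : ℚ_[p]) ^ (k - Vv p (x.1 i))) ^ (s i)) *
          ∏ i, ((p * Qq p (x.1 i) + Rr p (x.1 i) : ℕ) : ℚ_[p]) ^ (-(s i : ℤ)) := by
    intro x
    rw [tsum_congr (fun l => hFE x l), tsum_mul_left, ((hpi x).2).tsum_eq]
  have step1 : ∑' t, bigF p k s t
      = ∑' x : {y // y ∈ chainsN d (p ^ k)} × (Fin d → ℕ), bigF p k s (E x) :=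
    (hEinj.tsum_eq (Function.support_subset_iff'.2 hvan)).symm
  have step2 : ∑' x : {y // y ∈ chainsN d (p ^ k)} × (Fin d → ℕ), bigF p k s (E x)
      = ∑' (x : {y // y ∈ chainsN d (p ^ k)}), ∑' (l : Fin d → ℕ), bigF p k s (E (x, l)) :=
    Summable.tsum_prod' hsumE (fun x => hsumE.prod_factor x)
  have step3 : ∑' (x : {y // y ∈ chainsN d (p ^ k)}), ∑' (l : Fin d → ℕ), bigF p k s (E (x, l))
      = ∑ n ∈ chainsN d (p ^ k),
          ((∏ i, ((p : ℚ_[p]) ^ (k - Vv p (n i))) ^ (s i)) *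
            ∏ i, ((p * Qq p (n i) + Rr p (n i) : ℕ) : ℚ_[p]) ^ (-(s i : ℤ))) := by
    rw [tsum_congr hslice, tsum_fintype]
    exact Finset.sum_coe_sort (chainsN d (p ^ k)) (fun n =>
      (∏ i, ((p : ℚ_[p]) ^ (k - Vv p (n i))) ^ (s i)) *
        ∏ i, ((p * Qq p (n i) + Rr p (n i) : ℕ) : ℚ_[p]) ^ (-(s i : ℤ)))
  rw [step1, step2, step3, Finset.mul_sum]
  refine Finset.sum_congr rfl fun n hn => ?_
  obtain ⟨hio, -⟩ := (hmem n).1 hn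
  rw [← Finset.prod_pow_eq_pow_sum, ← Finset.prod_mul_distrib, ← Finset.prod_mul_distrib]
  refine Finset.prod_congr rfl fun i _ => ?_
  have hv : Vv p (n i) < k := Vv_lt (p := p) (n i) k (hio i).1 (hio i).2
  have hm : 0 < p * Qq p (n i) + Rr p (n i) := by
    have := Rr_pos (p := p) (n i) (hio i).1; omega
  have := scalar_eq (p := p) k (Vv p (n i)) (s i) (p * Qq p (n i) + Rr p (n i)) hv hm
  rw [hdec n i] at this
  exact this
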